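/- Let E, Ẽ, F be standard Borel spaces, X ∼ μ on E, X̃ generated from X by a Markov kernel R : E → Ẽ, and X_t generated from X by a Markov kernel P : E → F, with X_t ⊥ X̃ | X. Let P̄(x̃) = ∫ P(x) dπ(x|x̃) be the posterior-predictive kernel, where π(·|x̃) is the regular conditional law of X given X̃. Then E[KL(P(X) ‖ P̄(X̃))] = 0 if and only if P(X) = P̄(X̃) almost surely, which holds if and only if X_t and X are conditionally independent given X̃. In particular, conditioning on a corrupted observation attains the minimal conditional KL risk exactly when X̃ is a sufficient statistic of X for X_t. -/

import Mathlib

open MeasureTheory ProbabilityTheory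
open scoped ENNReal

open Classical in
/-- Kullback–Leibler divergence `KL(ν ‖ ρ) ∈ [0, ∞]`: equal to `∫ log (dν/dρ) dν` when
`ν ≪ ρ` and this integral exists, and `+∞` otherwise. -/
noncomputable def klDiv {α : Type*} [MeasurableSpace α] (ν ρ : Measure α) : ℝ≥0∞ :=
  if ν ≪ ρ ∧ Integrable (llr ν ρ) ν
  then ENNReal.ofReal (∫ x, llr ν ρ x ∂ν)
  else ⊤

-- pointwise inequality
lemma phi_nonneg' {y : ℝ} (hy : 0 ≤ y) : 0 ≤ y * Real.log y - y + 1 := by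
  rcases hy.eq_or_lt with h | h
  · simp [← h]
  · have h1 : Real.log (1 / y) ≤ 1 / y - 1 := Real.log_le_sub_one_of_pos (by positivity)
    rw [Real.log_div one_ne_zero h.ne', Real.log_one] at h1
    have h2 : y * (0 - Real.log y) ≤ y * (1 / y - 1) :=
      mul_le_mul_of_nonneg_left (by simpa using h1) h.le
    have h3 : y * (1 / y) = 1 := by field_simp
    nlinarith

lemma phi_eq_zero' {y : ℝ} (hy : 0 ≤ y) (h : y * Real.log y - y + 1 = 0) : y = 1 := by
  rcases hy.eq_or_lt with h0 | h0
  · exfalso; rw [← h0] at h; simp at h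
  by_contra hne
  have h1 : Real.log (1 / y) < 1 / y - 1 :=
    Real.log_lt_sub_one_of_pos (by positivity) (by
      intro hh
      rw [div_eq_one_iff_eq h0.ne'] at hh
      exact hne hh.symm)
  rw [Real.log_div one_ne_zero h0.ne', Real.log_one] at h1
  have h2 : y * (0 - Real.log y) < y * (1 / y - 1) :=
    mul_lt_mul_of_pos_left (by simpa using h1) h0
  have h3 : y * (1 / y) = 1 := by field_simp
  nlinarith

section MeasureLemmas
variable {G : Type*} [MeasurableSpace G]

lemma klAux_eq (ν ρ : Measure G) [IsProbabilityMeasure ν] [IsProbabilityMeasure ρ]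
    (h1 : ν ≪ ρ) (h2 : Integrable (llr ν ρ) ν) :
    ENNReal.ofReal (∫ x, llr ν ρ x ∂ν)
      = ∫⁻ x, ENNReal.ofReal ((ν.rnDeriv ρ x).toReal * Real.log (ν.rnDeriv ρ x).toReal
          - (ν.rnDeriv ρ x).toReal + 1) ∂ρ := by
  have hfl_int : Integrable (fun x => (ν.rnDeriv ρ x).toReal
      * Real.log (ν.rnDeriv ρ x).toReal) ρ := by
    have := (integrable_rnDeriv_smul_iff h1).mpr h2
    simpa [llr_def, smul_eq_mul] using this
  have hf_int : Integrable (fun x => (ν.rnDeriv ρ x).toReal) ρ :=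
    Measure.integrable_toReal_rnDeriv
  have h_int3 : Integrable (fun x => (ν.rnDeriv ρ x).toReal * Real.log (ν.rnDeriv ρ x).toReal
      - (ν.rnDeriv ρ x).toReal + 1) ρ := (hfl_int.sub hf_int).add (integrable_const 1)
  have h_nonneg : 0 ≤ᵐ[ρ] fun x => (ν.rnDeriv ρ x).toReal * Real.log (ν.rnDeriv ρ x).toReal
      - (ν.rnDeriv ρ x).toReal + 1 :=
    Filter.Eventually.of_forall fun x => phi_nonneg' ENNReal.toReal_nonneg
  rw [← ofReal_integral_eq_lintegral_ofReal h_int3 h_nonneg]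
  congr 1
  have hsub_int : Integrable (fun x => (ν.rnDeriv ρ x).toReal * Real.log (ν.rnDeriv ρ x).toReal
      - (ν.rnDeriv ρ x).toReal) ρ := hfl_int.sub hf_int
  rw [integral_add hsub_int (integrable_const 1), integral_const,
    integral_sub hfl_int hf_int]
  have hint1 : ∫ x, (ν.rnDeriv ρ x).toReal ∂ρ = 1 := by
    rw [Measure.integral_toReal_rnDeriv h1]; simp
  have hmain : ∫ x, (ν.rnDeriv ρ x).toReal * Real.log (ν.rnDeriv ρ x).toReal ∂ρ
      = ∫ x, llr ν ρ x ∂ν := by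
    rw [← integral_rnDeriv_smul h1 (f := llr ν ρ)]
    simp_rw [llr_def, smul_eq_mul]
  rw [hmain, hint1]
  simp

lemma klAux_zero (ν ρ : Measure G) [IsProbabilityMeasure ν] [IsProbabilityMeasure ρ]
    (h : ∫⁻ x, ENNReal.ofReal ((ν.rnDeriv ρ x).toReal * Real.log (ν.rnDeriv ρ x).toReal
          - (ν.rnDeriv ρ x).toReal + 1) ∂ρ = 0) : ν = ρ := by
  have hmf : Measurable fun x => (ν.rnDeriv ρ x).toReal :=
    (Measure.measurable_rnDeriv ν ρ).ennreal_toReal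
  have hm : Measurable fun x => ENNReal.ofReal ((ν.rnDeriv ρ x).toReal
      * Real.log (ν.rnDeriv ρ x).toReal - (ν.rnDeriv ρ x).toReal + 1) :=
    (((hmf.mul (Real.measurable_log.comp hmf)).sub hmf).add measurable_const).ennreal_ofReal
  have h0 := (lintegral_eq_zero_iff hm).mp h
  have h1 : ν.rnDeriv ρ =ᵐ[ρ] 1 := by
    filter_upwards [h0] with x hx
    have hle : (ν.rnDeriv ρ x).toReal * Real.log (ν.rnDeriv ρ x).toReal
        - (ν.rnDeriv ρ x).toReal + 1 ≤ 0 := by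
      simpa [ENNReal.ofReal_eq_zero] using hx.le
    have heq := le_antisymm hle (phi_nonneg' ENNReal.toReal_nonneg)
    have := phi_eq_zero' ENNReal.toReal_nonneg heq
    exact (ENNReal.toReal_eq_one_iff _).mp this
  have h2 : ρ.withDensity (ν.rnDeriv ρ) = ρ := by
    rw [withDensity_congr_ae h1, withDensity_one]
  have h3 := Measure.haveLebesgueDecomposition_add ν ρ
  rw [h2] at h3
  have h4 : ν.singularPart ρ Set.univ = 0 := by
    have hu : ν.singularPart ρ Set.univ + 1 = 0 + 1 := by
      have := congrArg (fun m : Measure G => m Set.univ) h3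
      simp only [Measure.add_apply, measure_univ] at this
      rw [zero_add, ← this]
    exact (ENNReal.add_left_inj (by simp)).mp hu
  have h5 : ν.singularPart ρ = 0 := Measure.measure_univ_eq_zero.mp h4
  rw [h5, zero_add] at h3
  exact h3

end MeasureLemmas

lemma klDiv_self {G : Type*} [MeasurableSpace G] (ν : Measure G) [IsProbabilityMeasure ν] :
    klDiv ν ν = 0 := by
  have hllr : llr ν ν =ᵐ[ν] 0 := by
    filter_upwards [Measure.rnDeriv_self ν] with x hx
    simp [llr_def, hx]
  have hint : Integrable (llr ν ν) ν := (integrable_const (0 : ℝ)).congr hllr.symm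
  rw [klDiv, if_pos ⟨Measure.AbsolutelyContinuous.rfl, hint⟩, integral_congr_ae hllr]
  simp

lemma measurableSet_kernelEq {α β G : Type*} [MeasurableSpace α] [MeasurableSpace β]
    [MeasurableSpace G] [MeasurableSpace.CountablyGenerated G]
    (κ : Kernel α G) (η : Kernel β G) [IsMarkovKernel κ] [IsMarkovKernel η] :
    MeasurableSet {p : α × β | κ p.1 = η p.2} := by
  classical
  set b := MeasurableSpace.countableGeneratingSet G with hb
  set S : Set (Set G) := Set.sInter '' {t | t.Finite ∧ t ⊆ b ∧ t.Nonempty} with hSdef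
  have hS_count : S.Countable := by
    have hsub : {t : Set (Set G) | t.Finite ∧ t ⊆ b ∧ t.Nonempty}
        ⊆ {t : Set (Set G) | t.Finite ∧ t ⊆ b} := fun t ht => ⟨ht.1, ht.2.1⟩
    exact (((Set.countable_setOf_finite_subset
      (MeasurableSpace.countable_countableGeneratingSet (α := G))).mono hsub).image _)
  have hS_meas : ∀ s ∈ S, MeasurableSet s := by
    rintro s ⟨t, ⟨htf, htb, -⟩, rfl⟩
    exact MeasurableSet.sInter htf.countable
      (fun u hu => MeasurableSpace.measurableSet_countableGeneratingSet (htb hu))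
  have hS_pi : IsPiSystem S := by
    rintro s ⟨ts, ⟨hf1, hb1, hn1⟩, rfl⟩ u ⟨tu, ⟨hf2, hb2, hn2⟩, rfl⟩ hne
    exact ⟨ts ∪ tu, ⟨hf1.union hf2, Set.union_subset hb1 hb2, hn1.mono Set.subset_union_left⟩,
      by rw [Set.sInter_union]⟩
  have hS_gen : MeasurableSpace.generateFrom S = ‹MeasurableSpace G› := by
    refine le_antisymm (MeasurableSpace.generateFrom_le hS_meas) ?_
    conv_lhs => rw [← MeasurableSpace.generateFrom_countableGeneratingSet (α := G)]
    refine MeasurableSpace.generateFrom_le fun s hs => MeasurableSpace.measurableSet_generateFrom ?_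
    exact ⟨{s}, ⟨Set.finite_singleton s, Set.singleton_subset_iff.mpr hs,
      Set.singleton_nonempty s⟩, Set.sInter_singleton s⟩
  have key : {p : α × β | κ p.1 = η p.2} = ⋂ s ∈ S, {p : α × β | κ p.1 s = η p.2 s} := by
    ext p
    simp only [Set.mem_setOf_eq, Set.mem_iInter]
    refine ⟨fun h s _ => by rw [h], fun h => ?_⟩
    exact MeasureTheory.ext_of_generate_finite S hS_gen.symm hS_pi (fun s hs => h s hs)
      (by simp)
  rw [key]
  refine MeasurableSet.biInter hS_count fun s hs => ?_
  have h1 : Measurable fun p : α × β => κ p.1 s :=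
    (Kernel.measurable_coe κ (hS_meas s hs)).comp measurable_fst
  have h2 : Measurable fun p : α × β => η p.2 s :=
    (Kernel.measurable_coe η (hS_meas s hs)).comp measurable_snd
  exact measurableSet_eq_fun h1 h2


/-- **Equality case in Corollary C.4: sufficiency of the corrupted observation.**
`X ∼ μ` on `E`, `X̃` is generated from `X` by the Markov kernel `R : E → Ẽ` (joint law
`μ ⊗ₘ R`), `X_t` is generated from `X` by the Markov kernel `P : E → F`, conditionally
independently of `X̃` given `X`; `π` is a regular conditional distribution of `X` given
`X̃` and `P̄ = P ∘ₖ π` the posterior-predictive kernel. Then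
`E[KL(P(X) ‖ P̄(X̃))] = 0` if and only if `P(X) = P̄(X̃)` almost surely, which holds
if and only if `X_t` and `X` are conditionally independent given `X̃` (the conditional
joint law `(π x̃) ⊗ₘ P` factorizes as the product `(π x̃) × (P̄ x̃)` for a.e. `x̃`),
i.e. exactly when `X̃` is a sufficient statistic of `X` for `X_t`. -/
theorem conditioning_gap_zero_iff_sufficient
    {E E' F : Type*} [MeasurableSpace E] [StandardBorelSpace E]
    [MeasurableSpace E'] [StandardBorelSpace E']
    [MeasurableSpace F] [StandardBorelSpace F]
    (μ : Measure E) [IsProbabilityMeasure μ]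
    (R : Kernel E E') [IsMarkovKernel R]
    (P : Kernel E F) [IsMarkovKernel P]
    (π : Kernel E' E) [IsMarkovKernel π]
    -- `π` is a regular conditional distribution of `X` given `X̃`
    (hπ : (μ ⊗ₘ R).map Prod.swap = ((μ ⊗ₘ R).snd) ⊗ₘ π) :
    ((∫⁻ z, klDiv (P z.1) ((P ∘ₖ π) z.2) ∂(μ ⊗ₘ R)) = 0
      ↔ ∀ᵐ z ∂(μ ⊗ₘ R), P z.1 = (P ∘ₖ π) z.2)
    ∧ ((∫⁻ z, klDiv (P z.1) ((P ∘ₖ π) z.2) ∂(μ ⊗ₘ R)) = 0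
      ↔ ∀ᵐ x' ∂((μ ⊗ₘ R).snd),
          (π x') ⊗ₘ P = (π x').prod ((P ∘ₖ π) x')) := by
  have hEne : Nonempty E := by
    by_contra h
    rw [not_nonempty_iff] at h
    have h1 : μ Set.univ = 1 := measure_univ
    rw [Set.univ_eq_empty_iff.mpr h, measure_empty] at h1
    simp at h1
  obtain ⟨x0⟩ := hEne
  haveI hFne : Nonempty F := by
    by_contra h
    rw [not_nonempty_iff] at h
    have h1 : P x0 Set.univ = 1 := measure_univ
    rw [Set.univ_eq_empty_iff.mpr h, measure_empty] at h1
    simp at h1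
  haveI : MeasurableSpace.CountableOrCountablyGenerated (E × E') F := ⟨Or.inr inferInstance⟩
  set ν : Measure (E × E') := μ ⊗ₘ R with hν
  set Q : Kernel E' F := P ∘ₖ π with hQdef
  set κ : Kernel (E × E') F := P.comap Prod.fst measurable_fst with hκdef
  set η : Kernel (E × E') F := Q.comap Prod.snd measurable_snd with hηdef
  set g : E × E' → ℝ≥0∞ := fun z => ∫⁻ x, ENNReal.ofReal
      ((Kernel.rnDeriv κ η z x).toReal * Real.log (Kernel.rnDeriv κ η z x).toReal
        - (Kernel.rnDeriv κ η z x).toReal + 1) ∂(η z) with hgdef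
  have hg_meas : Measurable g := by
    refine Measurable.lintegral_kernel_prod_right ?_
    have hrn : Measurable fun p : (E × E') × F => (Kernel.rnDeriv κ η p.1 p.2).toReal :=
      (Kernel.measurable_rnDeriv κ η).ennreal_toReal
    exact (((hrn.mul (Real.measurable_log.comp hrn)).sub hrn).add
      measurable_const).ennreal_ofReal
  have hg_eq : ∀ z : E × E', g z = ∫⁻ x, ENNReal.ofReal
      (((P z.1).rnDeriv (Q z.2) x).toReal * Real.log (((P z.1).rnDeriv (Q z.2) x).toReal)
        - ((P z.1).rnDeriv (Q z.2) x).toReal + 1) ∂(Q z.2) := by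
    intro z
    have hz1 : κ z = P z.1 := by rw [hκdef, Kernel.comap_apply]
    have hz2 : η z = Q z.2 := by rw [hηdef, Kernel.comap_apply]
    calc g z = ∫⁻ x, ENNReal.ofReal (((κ z).rnDeriv (η z) x).toReal
          * Real.log (((κ z).rnDeriv (η z) x).toReal)
          - ((κ z).rnDeriv (η z) x).toReal + 1) ∂(η z) := by
          refine lintegral_congr_ae ?_
          filter_upwards [Kernel.rnDeriv_eq_rnDeriv_measure (κ := κ) (η := η) (a := z)]
            with x hx
          rw [hx]
      _ = _ := by rw [hz1, hz2]
  have h_ge : ∀ z : E × E', g z ≤ klDiv (P z.1) (Q z.2) := by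
    intro z
    rw [hg_eq z, klDiv]
    split_ifs with hcond
    · exact le_of_eq (klAux_eq _ _ hcond.1 hcond.2).symm
    · exact le_top
  have key1 : (∫⁻ z, klDiv (P z.1) (Q z.2) ∂ν) = 0 → ∀ᵐ z ∂ν, P z.1 = Q z.2 := by
    intro hT
    have hg0 : ∫⁻ z, g z ∂ν = 0 :=
      le_antisymm (le_trans (lintegral_mono h_ge) hT.le) zero_le
    have h0 := (lintegral_eq_zero_iff hg_meas).mp hg0
    filter_upwards [h0] with z hz
    exact klAux_zero _ _ ((hg_eq z) ▸ hz)
  have key3 : (∀ᵐ z ∂ν, P z.1 = Q z.2) → (∫⁻ z, klDiv (P z.1) (Q z.2) ∂ν) = 0 := by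
    intro h
    have h0 : ∀ᵐ z ∂ν, klDiv (P z.1) (Q z.2) = 0 := by
      filter_upwards [h] with z hz
      rw [hz]
      exact klDiv_self _
    rw [lintegral_congr_ae h0, lintegral_zero]
  have hms : MeasurableSet {w : E' × E | P w.2 = Q w.1} := by
    have h := measurableSet_kernelEq (α := E') (β := E) Q P
    have : {p : E' × E | Q p.1 = P p.2} = {w : E' × E | P w.2 = Q w.1} := by
      ext w; simp [eq_comm]
    rwa [this] at h
  have hswap : (∀ᵐ z ∂ν, P z.1 = Q z.2) ↔ ∀ᵐ w ∂(ν.snd ⊗ₘ π), P w.2 = Q w.1 := by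
    rw [← hπ, MeasureTheory.ae_map_iff measurable_swap.aemeasurable hms]
    rfl
  have hfiber : ∀ x' : E', (∀ᵐ x ∂π x', P x = Q x')
      ↔ (π x') ⊗ₘ P = (π x').prod (Q x') := by
    intro x'
    constructor
    · intro h
      have hcc : (π x') ⊗ₘ P = (π x') ⊗ₘ (Kernel.const E (Q x')) := by
        refine Measure.compProd_congr ?_
        filter_upwards [h] with x hx
        rw [hx, Kernel.const_apply]
      rw [hcc, Measure.compProd_const]
    · intro h
      have hfst : ((π x') ⊗ₘ P).fst = π x' := Measure.fst_compProd _ _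
      have h1 : ∀ᵐ x ∂(((π x') ⊗ₘ P).fst), P x = ((π x') ⊗ₘ P).condKernel x :=
        eq_condKernel_of_measure_eq_compProd _ (by rw [hfst])
      have h2 : ∀ᵐ x ∂(((π x') ⊗ₘ P).fst),
          Kernel.const E (Q x') x = ((π x') ⊗ₘ P).condKernel x :=
        eq_condKernel_of_measure_eq_compProd _
          (by rw [hfst, h, ← Measure.compProd_const])
      rw [hfst] at h1 h2
      filter_upwards [h1, h2] with x hx1 hx2
      rw [hx1, ← hx2, Kernel.const_apply]
  have key2 : (∀ᵐ z ∂ν, P z.1 = Q z.2)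
      ↔ ∀ᵐ x' ∂ν.snd, (π x') ⊗ₘ P = (π x').prod (Q x') := by
    rw [hswap, Measure.ae_compProd_iff hms]
    constructor
    · intro h
      filter_upwards [h] with x' hx'
      exact (hfiber x').mp hx'
    · intro h
      filter_upwards [h] with x' hx'
      exact (hfiber x').mpr hx'
  exact ⟨⟨key1, key3⟩, ⟨fun hT => key2.mp (key1 hT), fun hB => key3 (key2.mpr hB)⟩⟩
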